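/- Let F = ℝ(x,y) be the field of rational functions in two variables over ℝ, and let K = K(x,y) be the kernel of a small-step walk, written as K = ã(y)x² + b̃(y)x + c̃(y) = a(x)y² + b(x)y + c(x), with K ≠ 0 and ã, c̃, a, c all nonzero. Suppose φ and ψ are ℝ-algebra automorphisms of F such that φ(y) = y and φ(x)·x·ã(y) = c̃(y), and ψ(x) = x and ψ(y)·y·a(x) = c(x), and suppose (φ∘ψ)ⁿ = id for some n ≥ 1. Then for every rational function u lying in the subfield ℝ(x) (functions of x alone) and every v ∈ ℝ(y) (functions of y alone), setting M = xy·(u + v)/K ∈ F, the alternating orbit sum vanishes: Σ_{k=0}^{n−1} (φ∘ψ)^k(M) − Σ_{k=0}^{n−1} ((φ∘ψ)^k ∘ φ)(M) = 0. -/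
import Mathlib


open Finset

/-- The field `ℝ(x,y)` of rational functions in two variables over `ℝ`. -/
noncomputable abbrev RatFuncXY : Type := FractionRing (MvPolynomial (Fin 2) ℝ)

/-- The variable `x` in `ℝ(x,y)`. -/
noncomputable def Xvar : RatFuncXY :=
  algebraMap (MvPolynomial (Fin 2) ℝ) RatFuncXY (MvPolynomial.X 0)

/-- The variable `y` in `ℝ(x,y)`. -/
noncomputable def Yvar : RatFuncXY :=
  algebraMap (MvPolynomial (Fin 2) ℝ) RatFuncXY (MvPolynomial.X 1)

/-- The subfield `ℝ(x)` of `ℝ(x,y)`: rational functions of `x` alone. -/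
noncomputable def subfieldX : Subfield RatFuncXY :=
  Subfield.closure (insert Xvar (Set.range (algebraMap ℝ RatFuncXY)))

/-- The subfield `ℝ(y)` of `ℝ(x,y)`: rational functions of `y` alone. -/
noncomputable def subfieldY : Subfield RatFuncXY :=
  Subfield.closure (insert Yvar (Set.range (algebraMap ℝ RatFuncXY)))

/-- The subfield of points fixed by an `ℝ`-algebra automorphism. -/
noncomputable def fixedSub (f : RatFuncXY ≃ₐ[ℝ] RatFuncXY) : Subfield RatFuncXY where
  carrier := {z | f z = z}
  mul_mem' := by intro a b ha hb; simp only [Set.mem_setOf_eq] at *; rw [map_mul, ha, hb]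
  one_mem' := map_one f
  add_mem' := by intro a b ha hb; simp only [Set.mem_setOf_eq] at *; rw [map_add, ha, hb]
  zero_mem' := map_zero f
  neg_mem' := by intro a ha; simp only [Set.mem_setOf_eq] at *; rw [map_neg, ha]
  inv_mem' := by intro a ha; simp only [Set.mem_setOf_eq] at *; rw [map_inv₀, ha]

lemma fix_closure (f : RatFuncXY ≃ₐ[ℝ] RatFuncXY) (t : RatFuncXY) (ht : f t = t) :
    ∀ z ∈ Subfield.closure (insert t (Set.range (algebraMap ℝ RatFuncXY))), f z = z := by
  have hle : Subfield.closure (insert t (Set.range (algebraMap ℝ RatFuncXY))) ≤ fixedSub f := by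
    apply Subfield.closure_le.mpr
    rintro z (rfl | ⟨r, rfl⟩)
    · exact ht
    · exact f.commutes r
  exact fun z hz => hle hz

set_option maxHeartbeats 1000000

/-- Let `K` be the kernel of a small-step walk, written `K = ã(y)x² + b̃(y)x + c̃(y)
= a(x)y² + b(x)y + c(x)` with `K ≠ 0` and `ã, c̃, a, c` nonzero. Let `φ, ψ` be `ℝ`-algebra
automorphisms of `ℝ(x,y)` with `φ(y) = y`, `φ(x)·x·ã(y) = c̃(y)`, `ψ(x) = x`,
`ψ(y)·y·a(x) = c(x)`, and `(φ∘ψ)ⁿ = id` for some `n ≥ 1`. Then for every `u ∈ ℝ(x)` and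
`v ∈ ℝ(y)`, the alternating orbit sum of `M = xy(u+v)/K` vanishes:
`Σ_{k<n} (φψ)^k(M) − Σ_{k<n} ((φψ)^k φ)(M) = 0`. -/

theorem alternating_orbit_sum_vanishes
    (p : ℤ → ℤ → ℝ) (hp0 : ∀ u v : ℤ, 0 ≤ p u v)
    (hp1 : ∑ u ∈ ({-1, 0, 1} : Finset ℤ), ∑ v ∈ ({-1, 0, 1} : Finset ℤ), p u v = 1)
    (K : RatFuncXY)
    (hK : K = (∑ u ∈ ({-1, 0, 1} : Finset ℤ), ∑ v ∈ ({-1, 0, 1} : Finset ℤ),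
        algebraMap ℝ RatFuncXY (p u v) * Xvar ^ (1 - u).toNat * Yvar ^ (1 - v).toNat) -
      Xvar * Yvar)
    (hKne : K ≠ 0)
    (atil btil ctil : RatFuncXY)
    (hatil : atil ∈ subfieldY) (hbtil : btil ∈ subfieldY) (hctil : ctil ∈ subfieldY)
    (hKx : K = atil * Xvar ^ 2 + btil * Xvar + ctil)
    (hatilne : atil ≠ 0) (hctilne : ctil ≠ 0)
    (a b c : RatFuncXY)
    (ha : a ∈ subfieldX) (hb : b ∈ subfieldX) (hc : c ∈ subfieldX)
    (hKy : K = a * Yvar ^ 2 + b * Yvar + c)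
    (hane : a ≠ 0) (hcne : c ≠ 0)
    (φ ψ : RatFuncXY ≃ₐ[ℝ] RatFuncXY)
    (hφy : φ Yvar = Yvar) (hφx : φ Xvar * Xvar * atil = ctil)
    (hψx : ψ Xvar = Xvar) (hψy : ψ Yvar * Yvar * a = c)
    (n : ℕ) (hn : 1 ≤ n) (hord : (φ * ψ) ^ n = 1) :
    ∀ u ∈ subfieldX, ∀ v ∈ subfieldY,
      (∑ k ∈ Finset.range n, ((φ * ψ) ^ k) (Xvar * Yvar * (u + v) / K)) -
        (∑ k ∈ Finset.range n, ((φ * ψ) ^ k * φ) (Xvar * Yvar * (u + v) / K)) = 0 := by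
  intro u hu v hv
  have fixφ : ∀ z ∈ subfieldY, φ z = z := fix_closure φ Yvar hφy
  have fixψ : ∀ z ∈ subfieldX, ψ z = z := fix_closure ψ Xvar hψx
  have hX0 : Xvar ≠ 0 := by
    simp [Xvar, IsFractionRing.to_map_eq_zero_iff, MvPolynomial.X_ne_zero]
  have hY0 : Yvar ≠ 0 := by
    simp [Yvar, IsFractionRing.to_map_eq_zero_iff, MvPolynomial.X_ne_zero]
  have hφX : φ Xvar ≠ 0 := by
    intro h; exact hctilne (by rw [← hφx, h, zero_mul, zero_mul])
  have hψY : ψ Yvar ≠ 0 := by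
    intro h; exact hcne (by rw [← hψy, h, zero_mul, zero_mul])
  have hφKne : φ K ≠ 0 := fun h => hKne (φ.injective (by rw [h, map_zero]))
  have hψKne : ψ K ≠ 0 := fun h => hKne (ψ.injective (by rw [h, map_zero]))
  have h1 : φ K = atil * (φ Xvar) ^ 2 + btil * φ Xvar + ctil := by
    conv_lhs => rw [hKx]
    rw [map_add, map_add, map_mul, map_mul, map_pow,
      fixφ atil hatil, fixφ btil hbtil, fixφ ctil hctil]
  have h2 : ψ K = a * (ψ Yvar) ^ 2 + b * ψ Yvar + c := by
    conv_lhs => rw [hKy]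
    rw [map_add, map_add, map_mul, map_mul, map_pow,
      fixψ a ha, fixψ b hb, fixψ c hc]
  have hφKx : φ K * Xvar = φ Xvar * K := by
    linear_combination Xvar * h1 - φ Xvar * hKx + (φ Xvar - Xvar) * hφx
  have hψKy : ψ K * Yvar = ψ Yvar * K := by
    linear_combination Yvar * h2 - ψ Yvar * hKy + (ψ Yvar - Yvar) * hψy
  set Mu := Xvar * Yvar * u / K with hMu
  set Mv := Xvar * Yvar * v / K with hMv
  have hφMv : φ Mv = Mv := by
    rw [hMv, map_div₀, map_mul, map_mul, hφy, fixφ v hv, div_eq_div_iff hφKne hKne]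
    linear_combination (-(Yvar * v)) * hφKx
  have hψMu : ψ Mu = Mu := by
    rw [hMu, map_div₀, map_mul, map_mul, hψx, fixψ u hu, div_eq_div_iff hψKne hKne]
    linear_combination (-(Xvar * u)) * hψKy
  set g := φ * ψ with hg
  have hφMu : φ Mu = g Mu := by
    rw [hg, AlgEquiv.mul_apply, hψMu]
  have hsplit : Xvar * Yvar * (u + v) / K = Mu + Mv := by
    rw [hMu, hMv, mul_add, add_div]
  have hstep : ∀ k : ℕ, ((g ^ k) * φ) (Mu + Mv) = (g ^ (k + 1)) Mu + (g ^ k) Mv := by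
    intro k
    rw [AlgEquiv.mul_apply, map_add, hφMv, hφMu, pow_succ]
    rw [show (g ^ k * g) Mu = (g ^ k) (g Mu) from AlgEquiv.mul_apply _ _ _,
      show g Mu = φ (ψ Mu) from by rw [hg, AlgEquiv.mul_apply], map_add]
  have hshift : ∑ k ∈ Finset.range n, (g ^ (k + 1)) Mu = ∑ k ∈ Finset.range n, (g ^ k) Mu := by
    have hone : (g ^ n) Mu = (g ^ 0) Mu := by rw [hord, pow_zero]
    have e1 := Finset.sum_range_succ' (fun k => (g ^ k) Mu) n
    have e2 := Finset.sum_range_succ (fun k => (g ^ k) Mu) n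
    rw [hone] at e2
    exact add_right_cancel (e1.symm.trans e2)
  calc (∑ k ∈ Finset.range n, (g ^ k) (Xvar * Yvar * (u + v) / K)) -
        ∑ k ∈ Finset.range n, ((g ^ k) * φ) (Xvar * Yvar * (u + v) / K)
      = (∑ k ∈ Finset.range n, ((g ^ k) Mu + (g ^ k) Mv)) -
        ∑ k ∈ Finset.range n, ((g ^ (k + 1)) Mu + (g ^ k) Mv) := by
        rw [hsplit]
        congr 1
        · exact Finset.sum_congr rfl fun k _ => by rw [map_add]
        · exact Finset.sum_congr rfl fun k _ => hstep k
    _ = (∑ k ∈ Finset.range n, (g ^ k) Mu) - ∑ k ∈ Finset.range n, (g ^ (k + 1)) Mu := by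
        rw [Finset.sum_add_distrib, Finset.sum_add_distrib]; ring
    _ = 0 := by rw [hshift, sub_self]
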